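/- arXiv:2512.04438 — 3 statements merged into one kernel-verified Lean document; each statement's English description precedes it below -/
import Mathlib

section
/- Let A and B be skew-symmetric n×n matrices over ℂ that are block-diagonal with identical block structure, each pair of corresponding blocks being of one of the three canonical Jordan–Kronecker types: (i) A_i = [[0, J_m(λ_i)], [−J_m(λ_i)ᵀ, 0]], B_i = [[0, I_m], [−I_m, 0]] for some λ_i ∈ ℂ; (ii) A_i = [[0, I_m], [−I_m, 0]], B_i = [[0, J_m(0)], [−J_m(0)ᵀ, 0]]; (iii) Kronecker blocks of odd size 2k+1 (k ≥ 0) with A_i = [[0, S_k], [−S_kᵀ, 0]], B_i = [[0, T_k], [−T_kᵀ, 0]], where S_k = (I_k | 0) and T_k = (0 | I_k) are k×(k+1). Then the number of Kronecker blocks (blocks of type (iii)) equals n − max_{λ∈ℂ} rank(A + λB). -/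
open Matrix

noncomputable section

/-- The `m × m` upper-triangular Jordan block with eigenvalue `lam`:
`lam` on the diagonal, `1` on the superdiagonal. -/
def jordanBlk (m : ℕ) (lam : ℂ) : Matrix (Fin m) (Fin m) ℂ :=
  Matrix.of fun i j =>
    if (i : ℕ) = (j : ℕ) then lam else if (j : ℕ) = (i : ℕ) + 1 then 1 else 0

/-- The skew-symmetric block `[[0, M], [-Mᵀ, 0]]` built from a `p × q` matrix `M`. -/
def skewPair {p q : Type} [Fintype p] [Fintype q] (M : Matrix p q ℂ) :
    Matrix (p ⊕ q) (p ⊕ q) ℂ :=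
  Matrix.fromBlocks 0 M (-Mᵀ) 0

/-- `S_k = (I_k | 0)`, the `k × (k+1)` matrix obtained from `I_k` by appending a zero
column on the right. -/
def Sk (k : ℕ) : Matrix (Fin k) (Fin (k + 1)) ℂ :=
  Matrix.of fun i j => if (i : ℕ) = (j : ℕ) then 1 else 0

/-- `T_k = (0 | I_k)`, the `k × (k+1)` matrix obtained from `I_k` by appending a zero
column on the left. -/
def Tk (k : ℕ) : Matrix (Fin k) (Fin (k + 1)) ℂ :=
  Matrix.of fun i j => if (j : ℕ) = (i : ℕ) + 1 then 1 else 0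

/-- The three types of blocks in the Jordan–Kronecker decomposition. -/
inductive JKType : Type
  | jordanFinite (m : ℕ) (lam : ℂ)   -- Jordan block with finite eigenvalue `lam`
  | jordanInfinite (m : ℕ)           -- Jordan block with eigenvalue ∞
  | kronecker (k : ℕ)                -- Kronecker block of (odd) size `2k + 1`

/-- The size of a canonical block of the given type. -/
def JKType.size : JKType → ℕ
  | .jordanFinite m _ => m + m
  | .jordanInfinite m => m + m
  | .kronecker k => k + (k + 1)

/-- The `A`-part of the canonical pair of blocks of the given type. -/
def JKType.Amat : (t : JKType) → Matrix (Fin t.size) (Fin t.size) ℂ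
  | .jordanFinite m lam =>
      (Matrix.reindex finSumFinEquiv finSumFinEquiv) (skewPair (jordanBlk m lam))
  | .jordanInfinite m =>
      (Matrix.reindex finSumFinEquiv finSumFinEquiv)
        (skewPair (1 : Matrix (Fin m) (Fin m) ℂ))
  | .kronecker k =>
      (Matrix.reindex finSumFinEquiv finSumFinEquiv) (skewPair (Sk k))

/-- The `B`-part of the canonical pair of blocks of the given type. -/
def JKType.Bmat : (t : JKType) → Matrix (Fin t.size) (Fin t.size) ℂ
  | .jordanFinite m _ =>
      (Matrix.reindex finSumFinEquiv finSumFinEquiv)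
        (skewPair (1 : Matrix (Fin m) (Fin m) ℂ))
  | .jordanInfinite m =>
      (Matrix.reindex finSumFinEquiv finSumFinEquiv) (skewPair (jordanBlk m 0))
  | .kronecker k =>
      (Matrix.reindex finSumFinEquiv finSumFinEquiv) (skewPair (Tk k))


/-- Whether a block type is a Kronecker block. -/
def JKType.isKronecker : JKType → Bool
  | .kronecker _ => true
  | _ => false

/-- finrank of a pi submodule. -/
theorem finrank_submodule_pi {ι : Type*} [Fintype ι] {φ : ι → Type*}
    [∀ i, AddCommGroup (φ i)] [∀ i, Module ℂ (φ i)] [∀ i, FiniteDimensional ℂ (φ i)]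
    (p : ∀ i, Submodule ℂ (φ i)) :
    Module.finrank ℂ (Submodule.pi Set.univ p) = ∑ i, Module.finrank ℂ (p i) := by
  classical
  let E : (Submodule.pi Set.univ p) ≃ₗ[ℂ] (∀ i, p i) :=
    { toFun := fun x i => ⟨x.1 i, x.2 i (Set.mem_univ i)⟩
      invFun := fun v => ⟨fun i => (v i).1, fun i _ => (v i).2⟩
      map_add' := fun x y => rfl
      map_smul' := fun c x => rfl
      left_inv := fun x => rfl
      right_inv := fun v => rfl }
  rw [E.finrank_eq, Module.finrank_pi_fintype]

theorem rank_blockDiagonal' {o : Type} [Fintype o] [DecidableEq o]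
    {m' n' : o → Type} [∀ i, Fintype (m' i)] [∀ i, Fintype (n' i)]
    (M : ∀ i, Matrix (m' i) (n' i) ℂ) :
    (Matrix.blockDiagonal' M).rank = ∑ i, (M i).rank := by
  classical
  let E1 := LinearEquiv.piCurry ℂ (fun (i : o) (_ : n' i) => ℂ)
  let E2 := LinearEquiv.piCurry ℂ (fun (i : o) (_ : m' i) => ℂ)
  let F : (∀ i, n' i → ℂ) →ₗ[ℂ] (∀ i, m' i → ℂ) :=
    LinearMap.pi fun i => (M i).mulVecLin ∘ₗ LinearMap.proj i
  have hmul : (Matrix.blockDiagonal' M).mulVecLin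
      = (E2.symm : (∀ i, m' i → ℂ) →ₗ[ℂ] _) ∘ₗ F ∘ₗ (E1 : _ →ₗ[ℂ] (∀ i, n' i → ℂ)) := by
    apply LinearMap.ext
    intro v
    funext x
    obtain ⟨i, j⟩ := x
    simp only [LinearMap.comp_apply, LinearEquiv.coe_coe, E1, E2, F,
      LinearEquiv.piCurry_apply, LinearEquiv.piCurry_symm_apply,
      Matrix.mulVecLin_apply, Sigma.uncurry, LinearMap.pi_apply, LinearMap.comp_apply,
      LinearMap.proj_apply, Sigma.curry, Matrix.mulVec, dotProduct]
    rw [← Finset.univ_sigma_univ, Finset.sum_sigma]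
    rw [Finset.sum_eq_single i]
    · exact Finset.sum_congr rfl fun s _ => by rw [Matrix.blockDiagonal'_apply_eq]
    · intro k _ hk
      apply Finset.sum_eq_zero
      intro j' _
      rw [Matrix.blockDiagonal'_apply_ne _ _ _ (Ne.symm hk), zero_mul]
    · intro h; exact absurd (Finset.mem_univ i) h
  have hrange : LinearMap.range F
      = Submodule.pi Set.univ (fun i => LinearMap.range (M i).mulVecLin) := by
    apply le_antisymm
    · rintro x ⟨v, rfl⟩
      intro i _
      exact ⟨v i, rfl⟩
    · intro x hx
      choose v hv using fun i => hx i (Set.mem_univ i)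
      exact ⟨v, funext fun i => hv i⟩
  rw [Matrix.rank, hmul, LinearMap.range_comp, LinearMap.range_comp, LinearEquiv.range,
    Submodule.map_top, LinearEquiv.finrank_map_eq, hrange, finrank_submodule_pi]
  rfl

theorem rank_reindex' {m n m₂ n₂ : Type} [Fintype m] [Fintype n] [Fintype m₂] [Fintype n₂]
    (e₁ : m ≃ m₂) (e₂ : n ≃ n₂) (M : Matrix m n ℂ) :
    (Matrix.reindex e₁ e₂ M).rank = M.rank := by
  rw [Matrix.rank, Matrix.rank, Matrix.mulVecLin_reindex, LinearMap.range_comp,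
    LinearMap.range_comp, LinearEquiv.range, Submodule.map_top, LinearEquiv.finrank_map_eq]

def sumSigmaEquiv (p q : Type) : (Σ b : Bool, cond b p q) ≃ p ⊕ q where
  toFun := fun x => match x with
    | ⟨true, a⟩ => Sum.inl a
    | ⟨false, a⟩ => Sum.inr a
  invFun := Sum.elim (fun a => ⟨true, a⟩) (fun a => ⟨false, a⟩)
  left_inv := by rintro ⟨(_ | _), x⟩ <;> rfl
  right_inv := by rintro (x | x) <;> rfl

theorem rank_fromBlocks_diag {p q r s : Type} [Fintype p] [Fintype q] [Fintype r] [Fintype s]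
    (A : Matrix p q ℂ) (D : Matrix r s ℂ) :
    (Matrix.fromBlocks A 0 0 D).rank = A.rank + D.rank := by
  classical
  letI i1 : ∀ b : Bool, Fintype (cond b p r) := fun b => match b with
    | true => (inferInstance : Fintype p)
    | false => (inferInstance : Fintype r)
  letI i2 : ∀ b : Bool, Fintype (cond b q s) := fun b => match b with
    | true => (inferInstance : Fintype q)
    | false => (inferInstance : Fintype s)
  let M : ∀ b : Bool, Matrix (cond b p r) (cond b q s) ℂ := fun b => match b with
    | true => A
    | false => D
  have key : Matrix.fromBlocks A 0 0 D
      = Matrix.reindex (sumSigmaEquiv p r) (sumSigmaEquiv q s)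
          (Matrix.blockDiagonal' (o := Bool) (m' := fun b => cond b p r)
            (n' := fun b => cond b q s) M) := by
    ext i j
    rcases i with i | i <;> rcases j with j | j <;>
      simp only [Matrix.reindex_apply, Matrix.submatrix_apply, sumSigmaEquiv, Equiv.coe_fn_symm_mk,
        Sum.elim_inl, Sum.elim_inr, Matrix.fromBlocks_apply₁₁, Matrix.fromBlocks_apply₁₂,
        Matrix.fromBlocks_apply₂₁, Matrix.fromBlocks_apply₂₂]
    · exact (Matrix.blockDiagonal'_apply_eq M true i j).symm
    · exact (Matrix.blockDiagonal'_apply_ne M (k := true) (k' := false) i j (by simp)).symm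
    · exact (Matrix.blockDiagonal'_apply_ne M (k := false) (k' := true) i j (by simp)).symm
    · exact (Matrix.blockDiagonal'_apply_eq M false i j).symm
  rw [key, rank_reindex', rank_blockDiagonal']
  rw [Fintype.sum_bool]

theorem rank_neg {m n : Type} [Fintype m] [Fintype n] (M : Matrix m n ℂ) :
    (-M).rank = M.rank := by
  have hneg : (-M).mulVecLin = -(M.mulVecLin) := by
    ext v i
    simp [Matrix.neg_mulVec]
  have : LinearMap.range (-M).mulVecLin = LinearMap.range M.mulVecLin := by
    rw [hneg, LinearMap.range_neg]
  rw [Matrix.rank, Matrix.rank, this]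

theorem rank_skewPair {p q : Type} [Fintype p] [Fintype q] [DecidableEq p] [DecidableEq q]
    (M : Matrix p q ℂ) : (skewPair M).rank = 2 * M.rank := by
  have key : skewPair M
      = Matrix.reindex (Equiv.refl (p ⊕ q)) (Equiv.sumComm q p) (Matrix.fromBlocks M 0 0 (-Mᵀ)) := by
    ext i j
    rcases i with i | i <;> rcases j with j | j <;> rfl
  rw [key, rank_reindex', rank_fromBlocks_diag, rank_neg, Matrix.rank_transpose, two_mul]

theorem rank_of_det_ne_zero {m : ℕ} (M : Matrix (Fin m) (Fin m) ℂ) (h : M.det ≠ 0) :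
    M.rank = m := by
  rw [Matrix.rank_of_isUnit M ((Matrix.isUnit_iff_isUnit_det M).2 (isUnit_iff_ne_zero.2 h)),
    Fintype.card_fin]

theorem rank_jordan_plus {m : ℕ} (μ lam : ℂ) (h : μ + lam ≠ 0) :
    (jordanBlk m μ + lam • (1 : Matrix (Fin m) (Fin m) ℂ)).rank = m := by
  apply _root_.rank_of_det_ne_zero
  have htri : (jordanBlk m μ + lam • (1 : Matrix (Fin m) (Fin m) ℂ)).BlockTriangular id := by
    intro i j hij
    have hji : (j : ℕ) < (i : ℕ) := hij
    have h1 : (i : ℕ) ≠ (j : ℕ) := by omega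
    have h2 : (j : ℕ) ≠ (i : ℕ) + 1 := by omega
    have h3 : i ≠ j := fun hh => h1 (by rw [hh])
    simp [jordanBlk, Matrix.add_apply, Matrix.smul_apply, Matrix.one_apply, h1, h2, h3]
  rw [Matrix.det_of_upperTriangular htri]
  have hdiag : ∀ i : Fin m, (jordanBlk m μ + lam • (1 : Matrix (Fin m) (Fin m) ℂ)) i i
      = μ + lam := by
    intro i
    simp [jordanBlk, Matrix.add_apply, Matrix.smul_apply, Matrix.one_apply]
  rw [Finset.prod_congr rfl fun i _ => hdiag i, Finset.prod_const]
  exact pow_ne_zero _ h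

theorem rank_one_add_smul_jordan {m : ℕ} (lam : ℂ) :
    ((1 : Matrix (Fin m) (Fin m) ℂ) + lam • jordanBlk m 0).rank = m := by
  apply _root_.rank_of_det_ne_zero
  have htri : ((1 : Matrix (Fin m) (Fin m) ℂ) + lam • jordanBlk m 0).BlockTriangular id := by
    intro i j hij
    have hji : (j : ℕ) < (i : ℕ) := hij
    have h1 : (i : ℕ) ≠ (j : ℕ) := by omega
    have h2 : (j : ℕ) ≠ (i : ℕ) + 1 := by omega
    have h3 : i ≠ j := fun hh => h1 (by rw [hh])
    simp [jordanBlk, Matrix.add_apply, Matrix.smul_apply, Matrix.one_apply, h1, h2, h3]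
  rw [Matrix.det_of_upperTriangular htri]
  have hdiag : ∀ i : Fin m, ((1 : Matrix (Fin m) (Fin m) ℂ) + lam • jordanBlk m 0) i i = 1 := by
    intro i
    simp [jordanBlk, Matrix.add_apply, Matrix.smul_apply, Matrix.one_apply]
  rw [Finset.prod_congr rfl fun i _ => hdiag i, Finset.prod_const]
  simp

theorem rank_Sk_Tk (k : ℕ) (lam : ℂ) : (Sk k + lam • Tk k).rank = k := by
  refine le_antisymm ?_ ?_
  · simpa using (Sk k + lam • Tk k).rank_le_card_height
  · have hsub : (Sk k + lam • Tk k).submatrix id Fin.castSucc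
        = (1 : Matrix (Fin k) (Fin k) ℂ) + lam • jordanBlk k 0 := by
      ext i j
      by_cases h1 : (i : ℕ) = (j : ℕ)
      · have h3 : i = j := Fin.ext h1
        simp [Sk, Tk, jordanBlk, Matrix.submatrix_apply, Matrix.add_apply, Matrix.smul_apply,
          Matrix.one_apply, h1, h3]
      · have h3 : i ≠ j := fun hh => h1 (by rw [hh])
        by_cases h2 : (j : ℕ) = (i : ℕ) + 1 <;>
          simp [Sk, Tk, jordanBlk, Matrix.submatrix_apply, Matrix.add_apply, Matrix.smul_apply,
            Matrix.one_apply, h1, h2, h3, Fin.val_succ]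
    have hmul : (Sk k + lam • Tk k).submatrix id Fin.castSucc
        = (Sk k + lam • Tk k) * ((1 : Matrix (Fin (k+1)) (Fin (k+1)) ℂ).submatrix id Fin.castSucc) := by
      ext i j
      rw [Matrix.mul_apply]
      simp only [Matrix.submatrix_apply, id, Matrix.one_apply]
      rw [Finset.sum_eq_single (Fin.castSucc j)]
      · simp
      · intro b _ hb; simp [hb]
      · intro h; exact absurd (Finset.mem_univ _) h
    calc k = ((Sk k + lam • Tk k).submatrix id Fin.castSucc).rank := by
              rw [hsub, rank_one_add_smul_jordan]
      _ ≤ (Sk k + lam • Tk k).rank := by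
              rw [hmul]; exact Matrix.rank_mul_le_left _ _

def JKType.eig : JKType → ℂ
  | .jordanFinite _ μ => μ
  | _ => 0

theorem skewPair_add_smul {p q : Type} [Fintype p] [Fintype q]
    (X Y : Matrix p q ℂ) (lam : ℂ) :
    skewPair X + lam • skewPair Y = skewPair (X + lam • Y) := by
  ext i j
  rcases i with i | i <;> rcases j with j | j <;>
    simp [skewPair, Matrix.add_apply, Matrix.smul_apply, Matrix.transpose_apply] <;> ring

theorem reindex_add_smul {m n m₂ n₂ : Type} (e₁ : m ≃ m₂) (e₂ : n ≃ n₂)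
    (X Y : Matrix m n ℂ) (lam : ℂ) :
    Matrix.reindex e₁ e₂ X + lam • Matrix.reindex e₁ e₂ Y
      = Matrix.reindex e₁ e₂ (X + lam • Y) := by
  ext i j
  simp

theorem block_rank_le (t : JKType) (lam : ℂ) :
    (t.Amat + lam • t.Bmat).rank + (if t.isKronecker = true then 1 else 0) ≤ t.size := by
  cases t with
  | jordanFinite m μ =>
      dsimp only [JKType.isKronecker, JKType.size]
      simpa [JKType.size] using ((JKType.jordanFinite m μ).Amat
        + lam • (JKType.jordanFinite m μ).Bmat).rank_le_card_height.trans_eq (Fintype.card_fin _)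
  | jordanInfinite m =>
      dsimp only [JKType.isKronecker, JKType.size]
      simpa [JKType.size] using ((JKType.jordanInfinite m).Amat
        + lam • (JKType.jordanInfinite m).Bmat).rank_le_card_height.trans_eq (Fintype.card_fin _)
  | kronecker k =>
      dsimp only [JKType.Amat, JKType.Bmat, JKType.size, JKType.isKronecker]
      show (((reindex finSumFinEquiv finSumFinEquiv) (skewPair (Sk k)) +
        lam • (reindex finSumFinEquiv finSumFinEquiv) (skewPair (Tk k))).rank +
        if true = true then 1 else 0) ≤ k + (k + 1)
      rw [reindex_add_smul, skewPair_add_smul, rank_reindex', rank_skewPair, rank_Sk_Tk]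
      simp
      omega

theorem block_rank_eq (t : JKType) (lam : ℂ) (h : t.eig + lam ≠ 0) :
    (t.Amat + lam • t.Bmat).rank + (if t.isKronecker = true then 1 else 0) = t.size := by
  cases t with
  | jordanFinite m μ =>
      have h' : μ + lam ≠ 0 := h
      dsimp only [JKType.Amat, JKType.Bmat, JKType.size, JKType.isKronecker]
      show (((reindex finSumFinEquiv finSumFinEquiv) (skewPair (jordanBlk m μ)) +
        lam • (reindex finSumFinEquiv finSumFinEquiv)
          (skewPair (1 : Matrix (Fin m) (Fin m) ℂ))).rank + if false = true then 1 else 0) = m + m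
      rw [reindex_add_smul, skewPair_add_smul, rank_reindex', rank_skewPair,
        rank_jordan_plus μ lam h']
      simp
      omega
  | jordanInfinite m =>
      dsimp only [JKType.Amat, JKType.Bmat, JKType.size, JKType.isKronecker]
      show (((reindex finSumFinEquiv finSumFinEquiv) (skewPair (1 : Matrix (Fin m) (Fin m) ℂ)) +
        lam • (reindex finSumFinEquiv finSumFinEquiv) (skewPair (jordanBlk m 0))).rank +
        if false = true then 1 else 0) = m + m
      rw [reindex_add_smul, skewPair_add_smul, rank_reindex', rank_skewPair,
        rank_one_add_smul_jordan]
      simp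
      omega
  | kronecker k =>
      dsimp only [JKType.Amat, JKType.Bmat, JKType.size, JKType.isKronecker]
      show (((reindex finSumFinEquiv finSumFinEquiv) (skewPair (Sk k)) +
        lam • (reindex finSumFinEquiv finSumFinEquiv) (skewPair (Tk k))).rank +
        if true = true then 1 else 0) = k + (k + 1)
      rw [reindex_add_smul, skewPair_add_smul, rank_reindex', rank_skewPair, rank_Sk_Tk]
      simp
      omega

/-- If skew-symmetric `A`, `B` are simultaneously block-diagonal in the canonical
Jordan–Kronecker form, then the number of Kronecker blocks equals
`n - max_{λ ∈ ℂ} rank (A + λB)`. -/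
theorem kronecker_block_count (n N : ℕ) (t : Fin N → JKType)
    (e : (Σ i, Fin (t i).size) ≃ Fin n)
    (A B : Matrix (Fin n) (Fin n) ℂ)
    (hA : A = (Matrix.reindex e e) (Matrix.blockDiagonal' fun i => (t i).Amat))
    (hB : B = (Matrix.reindex e e) (Matrix.blockDiagonal' fun i => (t i).Bmat))
    (R : ℕ) (hR : IsGreatest {r : ℕ | ∃ lam : ℂ, (A + lam • B).rank = r} R) :
    (Finset.univ.filter fun i => (t i).isKronecker = true).card = n - R := by
  classical
  have hcard : ∑ i, (t i).size = n := by
    have h1 : Fintype.card ((i : Fin N) × Fin (t i).size) = Fintype.card (Fin n) :=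
      Fintype.card_congr e
    simpa [Fintype.card_sigma, Fintype.card_fin] using h1
  set K := (Finset.univ.filter fun i => (t i).isKronecker = true).card with hK
  have hKsum : K = ∑ i : Fin N, (if (t i).isKronecker = true then 1 else 0) := by
    rw [hK, Finset.card_filter]
  have hrank : ∀ lam : ℂ, (A + lam • B).rank
      = ∑ i, ((t i).Amat + lam • (t i).Bmat).rank := by
    intro lam
    rw [hA, hB, reindex_add_smul, ← Matrix.blockDiagonal'_smul, ← Matrix.blockDiagonal'_add,
      rank_reindex', rank_blockDiagonal']
    rfl
  have hupper : ∀ lam : ℂ, (A + lam • B).rank + K ≤ n := by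
    intro lam
    rw [hrank lam, hKsum, ← Finset.sum_add_distrib, ← hcard]
    exact Finset.sum_le_sum fun i _ => block_rank_le (t i) lam
  have hattain : ∃ lam : ℂ, (A + lam • B).rank + K = n := by
    obtain ⟨lam, hlam⟩ := Infinite.exists_notMem_finset
      (Finset.image (fun i => -(t i).eig) Finset.univ)
    refine ⟨lam, ?_⟩
    rw [hrank lam, hKsum, ← Finset.sum_add_distrib, ← hcard]
    refine Finset.sum_congr rfl fun i _ => block_rank_eq (t i) lam ?_
    intro h0
    exact hlam (Finset.mem_image.2 ⟨i, Finset.mem_univ i,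
      neg_eq_of_add_eq_zero_right h0⟩)
  obtain ⟨lam0, hlam0⟩ := hR.1
  obtain ⟨lam1, hattain1⟩ := hattain
  have h1 : R + K ≤ n := hlam0 ▸ hupper lam0
  have h2 : (A + lam1 • B).rank ≤ R := hR.2 ⟨lam1, rfl⟩
  omega
end
end

section
/- Let G be the 4-dimensional complex Lie algebra with basis e_1, e_2, e_3, e_4 and non-trivial Lie brackets [e_3, e_1] = e_1 and [e_3, e_4] = e_2, and for x ∈ ℂ^4 let A_x be the associated 4×4 skew-symmetric matrix with rows (0, 0, −x_1, 0), (0, 0, 0, 0), (x_1, 0, 0, x_2), (0, 0, −x_2, 0). Then there exists a nonzero polynomial F in 8 variables over ℂ such that for every (x, a) ∈ ℂ^4 × ℂ^4 with F(x, a) ≠ 0 and every (α, β) ∈ ℂ² with (α, β) ≠ (0, 0), one has rank(αA_x + βA_a) = 2 = max_{y ∈ ℂ^4} rank A_y. (Hence the generic pencil has no Jordan blocks, i.e. G is of Kronecker type.) -/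
open Matrix

noncomputable section

/-- The matrix `A_x` of the 4-dimensional Lie algebra with non-trivial brackets
`[e₃,e₁] = e₁`, `[e₃,e₄] = e₂`: its rows are
`(0,0,-x₁,0), (0,0,0,0), (x₁,0,0,x₂), (0,0,-x₂,0)`. -/
def Amat4 (x : Fin 4 → ℂ) : Matrix (Fin 4) (Fin 4) ℂ :=
  !![0,   0, -x 0, 0;
     0,   0,  0,   0;
     x 0, 0,  0,   x 1;
     0,   0, -x 1, 0]

lemma Bmat_def (c d : ℂ) : Amat4 ![c, d, 0, 0] =
    !![0,0,-c,0; 0,0,0,0; c,0,0,d; 0,0,-d,0] := by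
  simp [Amat4, Matrix.vecHead, Matrix.vecTail]

lemma rank_eq_two_aux (M : Matrix (Fin 4) (Fin 4) ℂ) (v1 v2 : Fin 4 → ℂ)
    (h1 : v1 ∈ Set.range Mᵀ) (h2 : v2 ∈ Set.range Mᵀ)
    (hsp : ∀ i, Mᵀ i ∈ Submodule.span ℂ {v1, v2})
    (hind : LinearIndependent ℂ ![v1, v2]) : M.rank = 2 := by
  rw [rank_eq_finrank_span_cols]
  have hset : Set.range ![v1, v2] = {v1, v2} := by
    ext z
    constructor
    · rintro ⟨i, rfl⟩; fin_cases i <;> simp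
    · rintro (rfl | rfl)
      · exact ⟨0, rfl⟩
      · exact ⟨1, rfl⟩
  have hEq : Submodule.span ℂ (Set.range Mᵀ) = Submodule.span ℂ {v1, v2} := by
    apply le_antisymm
    · rw [Submodule.span_le]; rintro _ ⟨i, rfl⟩; exact hsp i
    · rw [Submodule.span_le]
      rintro x (rfl | rfl) <;> exact Submodule.subset_span ‹_›
  rw [show Set.range M.col = Set.range Mᵀ from rfl, hEq, ← hset, finrank_span_eq_card hind, Fintype.card_fin]

lemma rank_B (c d : ℂ) (h : ¬(c = 0 ∧ d = 0)) :
    (!![0,0,-c,0; 0,0,0,0; c,0,0,d; 0,0,-d,0] : Matrix (Fin 4) (Fin 4) ℂ).rank = 2 := by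
  set M : Matrix (Fin 4) (Fin 4) ℂ := !![0,0,-c,0; 0,0,0,0; c,0,0,d; 0,0,-d,0] with hM
  have hcol : ∀ i, Mᵀ i = ![![0,0,c,0], ![0,0,0,0], ![-c,0,0,-d], ![0,0,d,0]] i := by
    intro i
    funext j
    fin_cases i <;> fin_cases j <;> simp [hM, Matrix.vecHead, Matrix.vecTail]
  by_cases hc : c = 0
  · have hd : d ≠ 0 := fun hd => h ⟨hc, hd⟩
    subst hc
    apply rank_eq_two_aux M ![0,0,0,-d] ![0,0,d,0]
    · exact ⟨2, by rw [hcol]; funext j; fin_cases j <;> simp [Matrix.vecHead, Matrix.vecTail]⟩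
    · exact ⟨3, by rw [hcol]; funext j; fin_cases j <;> simp [Matrix.vecHead, Matrix.vecTail]⟩
    · intro i
      fin_cases i <;> rw [hcol] <;>
        simp only [Submodule.mem_span_pair]
      · exact ⟨0, 0, by funext j; fin_cases j <;> simp [Matrix.vecHead, Matrix.vecTail]⟩
      · exact ⟨0, 0, by funext j; fin_cases j <;> simp [Matrix.vecHead, Matrix.vecTail]⟩
      · exact ⟨1, 0, by funext j; fin_cases j <;> simp [Matrix.vecHead, Matrix.vecTail]⟩
      · exact ⟨0, 1, by funext j; fin_cases j <;> simp [Matrix.vecHead, Matrix.vecTail]⟩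
    · rw [LinearIndependent.pair_iff]
      intro s t hst
      have h3 := congrFun hst 3
      have h2 := congrFun hst 2
      simp at h3 h2
      constructor
      · rcases h3 with h3 | h3
        · exact h3
        · exact absurd h3 hd
      · rcases h2 with h2 | h2
        · exact h2
        · exact absurd h2 hd
  · apply rank_eq_two_aux M ![0,0,c,0] ![-c,0,0,-d]
    · exact ⟨0, by rw [hcol]; simp⟩
    · exact ⟨2, by rw [hcol]; simp⟩
    · intro i
      fin_cases i <;> rw [hcol] <;>
        simp only [Submodule.mem_span_pair]
      · exact ⟨1, 0, by funext j; fin_cases j <;> simp [Matrix.vecHead, Matrix.vecTail]⟩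
      · exact ⟨0, 0, by funext j; fin_cases j <;> simp [Matrix.vecHead, Matrix.vecTail]⟩
      · exact ⟨0, 1, by funext j; fin_cases j <;> simp [Matrix.vecHead, Matrix.vecTail]⟩
      · exact ⟨d / c, 0, by funext j; fin_cases j <;> (try simp [Matrix.vecHead, Matrix.vecTail]) <;> field_simp⟩
    · rw [LinearIndependent.pair_iff]
      intro s t hst
      have h2 := congrFun hst 2
      have h0 := congrFun hst 0
      simp at h2 h0
      constructor
      · rcases h2 with h2 | h2
        · exact h2
        · exact absurd h2 hc
      · rcases h0 with h0 | h0
        · exact h0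
        · exact absurd h0 hc

lemma rank_B_le (c d : ℂ) :
    (!![0,0,-c,0; 0,0,0,0; c,0,0,d; 0,0,-d,0] : Matrix (Fin 4) (Fin 4) ℂ).rank ≤ 2 := by
  by_cases h : c = 0 ∧ d = 0
  · obtain ⟨rfl, rfl⟩ := h
    have : (!![0,0,-(0:ℂ),0; 0,0,0,0; 0,0,0,0; 0,0,-0,0] : Matrix (Fin 4) (Fin 4) ℂ) = 0 := by
      funext i j; fin_cases i <;> fin_cases j <;> simp [Matrix.vecHead, Matrix.vecTail]
    rw [this, rank_zero]; omega
  · rw [rank_B c d h]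

lemma combo (x a : Fin 4 → ℂ) (α β : ℂ) :
    α • Amat4 x + β • Amat4 a =
      !![0,0,-(α * x 0 + β * a 0),0; 0,0,0,0;
         (α * x 0 + β * a 0),0,0,(α * x 1 + β * a 1); 0,0,-(α * x 1 + β * a 1),0] := by
  funext i j
  fin_cases i <;> fin_cases j <;> simp [Amat4, Matrix.vecHead, Matrix.vecTail] <;> ring_nf

/-- There is a nonzero polynomial `F` in 8 variables such that whenever `F(x,a) ≠ 0`
and `(α, β) ≠ (0, 0)`, one has `rank (α A_x + β A_a) = 2 = max_y rank A_y`. Hence the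
generic pencil has no Jordan blocks, i.e. the Lie algebra is of Kronecker type. -/
theorem kronecker_type_example :
    ∃ F : MvPolynomial (Fin 4 ⊕ Fin 4) ℂ, F ≠ 0 ∧
      (∀ x a : Fin 4 → ℂ, MvPolynomial.eval (Sum.elim x a) F ≠ 0 →
        ∀ α β : ℂ, (α, β) ≠ (0, 0) → (α • Amat4 x + β • Amat4 a).rank = 2) ∧
      IsGreatest {r : ℕ | ∃ y : Fin 4 → ℂ, (Amat4 y).rank = r} 2 := by
  refine ⟨MvPolynomial.X (Sum.inl 0) * MvPolynomial.X (Sum.inr 1)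
    - MvPolynomial.X (Sum.inl 1) * MvPolynomial.X (Sum.inr 0), ?_, ?_, ?_⟩
  · intro hF
    have := congrArg (MvPolynomial.eval (Sum.elim ![1,0,0,0] ![0,1,0,0])) hF
    simp at this
  · intro x a hF α β hαβ
    have hdet : x 0 * a 1 - x 1 * a 0 ≠ 0 := by simpa using hF
    rw [combo]
    apply rank_B
    rintro ⟨h1, h2⟩
    apply hαβ
    have hα : α = 0 := by
      have key : α * (x 0 * a 1 - x 1 * a 0) = 0 := by linear_combination a 1 * h1 - a 0 * h2
      exact (mul_eq_zero.1 key).resolve_right hdet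
    have hβ : β = 0 := by
      have key : β * (x 0 * a 1 - x 1 * a 0) = 0 := by linear_combination x 0 * h2 - x 1 * h1
      exact (mul_eq_zero.1 key).resolve_right hdet
    rw [hα, hβ]
  · constructor
    · refine ⟨![1,0,0,0], ?_⟩
      have : Amat4 ![1,0,0,0] = !![0,0,-(1:ℂ),0; 0,0,0,0; 1,0,0,0; 0,0,-0,0] := by
        simp [Amat4, Matrix.vecHead, Matrix.vecTail]
      rw [this, rank_B 1 0 (by simp)]
    · rintro r ⟨y, rfl⟩
      have : Amat4 y = !![0,0,-(y 0),0; 0,0,0,0; y 0,0,0,y 1; 0,0,-(y 1),0] := rfl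
      rw [this]
      exact rank_B_le (y 0) (y 1)
end
end

section
/- Let L_1 be the 7-dimensional complex Lie algebra with basis x_1, …, x_7 and non-trivial brackets [x_1,x_2]=x_3, [x_1,x_3]=x_4, [x_1,x_7]=−x_1, [x_2,x_7]=2x_2, [x_3,x_7]=x_3, [x_5,x_6]=−x_5, [x_6,x_7]=x_4. For x ∈ ℂ^7 let A_x be the 7×7 skew-symmetric matrix with (i,j) entry Σ_k c_{ij}^k x_k, where c_{ij}^k are the structure constants of L_1, and let R = max_{y ∈ ℂ^7} rank A_y. Then for every (x, a) ∈ ℂ^7 × ℂ^7 there exists (α, β) ∈ ℂ² with (α, β) ≠ (0, 0) such that rank(αA_x + βA_a) < R. (Together with R < 7, forced since 7 is odd, this shows the generic pencil contains both Jordan and Kronecker blocks, i.e. L_1 is of mixed type.) -/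
open Matrix

noncomputable section

/-- The skew-symmetric matrix `A_x` (with `(i,j)` entry `Σ_k c_ij^k x_k`) of the
7-dimensional complex Lie algebra `L1` with non-trivial brackets
`[x₁,x₂]=x₃, [x₁,x₃]=x₄, [x₁,x₇]=-x₁, [x₂,x₇]=2x₂, [x₃,x₇]=x₃, [x₅,x₆]=-x₅, [x₆,x₇]=x₄`. -/
def L1mat (x : Fin 7 → ℂ) : Matrix (Fin 7) (Fin 7) ℂ :=
  !![0, x 2, x 3, 0, 0, 0, -x 0;
     -x 2, 0, 0, 0, 0, 0, 2 * x 1;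
     -x 3, 0, 0, 0, 0, 0, x 2;
     0, 0, 0, 0, 0, 0, 0;
     0, 0, 0, 0, 0, -x 4, 0;
     0, 0, 0, 0, x 4, 0, x 3;
     x 0, -2 * x 1, -x 2, 0, 0, -x 3, 0]

/-- Selection matrix extracting the six rows `0,1,2,4,5,6`. -/
def Emat : Matrix (Fin 6) (Fin 7) ℂ :=
  !![1,0,0,0,0,0,0; 0,1,0,0,0,0,0; 0,0,1,0,0,0,0;
     0,0,0,0,1,0,0; 0,0,0,0,0,1,0; 0,0,0,0,0,0,1]

/-- A right quasi-inverse for `L1mat y0`. -/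
def Hmat : Matrix (Fin 7) (Fin 6) ℂ :=
  !![0,-1,0,0,0,0;
     1,0,1,0,0,0;
     0,-1,0,0,0,-1;
     0,0,0,0,0,0;
     0,0,0,0,1,0;
     0,0,0,-1,0,0;
     0,0,1,0,0,0]

/-- The insertion matrix placing five rows into positions `0,1,2,5,6`. -/
def Pmat : Matrix (Fin 7) (Fin 5) ℂ :=
  Matrix.of fun i k => if (![0,1,2,5,6] : Fin 5 → Fin 7) k = i then 1 else 0

/-- A point where `L1mat` has rank `6`. -/
def y0 : Fin 7 → ℂ := ![1,0,1,0,1,0,0]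

lemma h75 {a : Type*} (x : a) (u : Fin 6 → a) : Matrix.vecCons x u 5 = u 4 := rfl
lemma h76 {a : Type*} (x : a) (u : Fin 6 → a) : Matrix.vecCons x u 6 = u 5 := rfl
lemma h65 {a : Type*} (x : a) (u : Fin 5 → a) : Matrix.vecCons x u 5 = u 4 := rfl

set_option maxHeartbeats 1000000 in
lemma EAH : Emat * L1mat y0 * Hmat = 1 := by
  ext i j
  fin_cases i <;> fin_cases j <;>
    (norm_num [Emat, Hmat, L1mat, y0, Matrix.mul_apply, Fin.sum_univ_seven, Fin.sum_univ_six,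
      Matrix.one_apply, h75, h76, h65, Matrix.cons_val_four, Matrix.cons_val_three, Matrix.cons_val_two] <;>
     norm_num [Matrix.vecHead, Matrix.vecTail, Function.comp, Fin.ext_iff])

lemma rank_lb : 6 ≤ (L1mat y0).rank := by
  have h1 : (Emat * L1mat y0 * Hmat).rank = 6 := by
    rw [EAH, Matrix.rank_one]
    simp
  calc (6 : ℕ) = (Emat * L1mat y0 * Hmat).rank := h1.symm
    _ ≤ (Emat * (L1mat y0 * Hmat)).rank := by rw [Matrix.mul_assoc]
    _ ≤ (L1mat y0 * Hmat).rank := Matrix.rank_mul_le_right _ _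
    _ ≤ (L1mat y0).rank := Matrix.rank_mul_le_left _ _

set_option maxHeartbeats 2000000 in
lemma hfac (y : Fin 7 → ℂ) (hy : y 4 = 0) :
    L1mat y = Pmat * (L1mat y).submatrix ![0,1,2,5,6] id := by
  ext i j
  rw [Matrix.mul_apply]
  fin_cases i <;>
    simp [Pmat, L1mat, Matrix.mul_apply, Fin.sum_univ_five, hy] <;>
    (fin_cases j <;> first | rfl | simp [hy])

lemma rank_ub (y : Fin 7 → ℂ) (hy : y 4 = 0) : (L1mat y).rank ≤ 5 := by
  calc (L1mat y).rank = (Pmat * (L1mat y).submatrix ![0,1,2,5,6] id).rank := by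
        rw [← hfac y hy]
    _ ≤ ((L1mat y).submatrix ![0,1,2,5,6] id).rank := Matrix.rank_mul_le_right _ _
    _ ≤ 5 := by simpa using Matrix.rank_le_card_height ((L1mat y).submatrix ![0,1,2,5,6] id)

set_option maxHeartbeats 1000000 in
lemma lin (α β : ℂ) (x a : Fin 7 → ℂ) :
    α • L1mat x + β • L1mat a = L1mat (α • x + β • a) := by
  unfold L1mat
  simp only [Matrix.smul_of, Matrix.smul_cons, smul_eq_mul, Matrix.smul_empty,
    Matrix.add_cons, Matrix.head_cons, Matrix.tail_cons, Matrix.empty_add_empty,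
    Matrix.of_add_of, Pi.add_apply, Pi.smul_apply]
  norm_num
  ring_nf
  simp

/-- With `R = max_y rank A_y`, for every pair `(x, a)` there exists `(α, β) ≠ (0, 0)`
with `rank (α A_x + β A_a) < R`: the generic pencil has Jordan blocks, and together
with `R < 7` this shows `L1` is of mixed type. -/
theorem L1_mixed_type (R : ℕ)
    (hR : IsGreatest {r : ℕ | ∃ y : Fin 7 → ℂ, (L1mat y).rank = r} R) :
    ∀ x a : Fin 7 → ℂ, ∃ α β : ℂ, (α, β) ≠ (0, 0) ∧
      (α • L1mat x + β • L1mat a).rank < R := by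
  intro x a
  have hR6 : 6 ≤ R := le_trans rank_lb (hR.2 ⟨y0, rfl⟩)
  by_cases ha : a 4 = 0
  · refine ⟨0, 1, by simp, ?_⟩
    rw [lin]
    have h4 : ((0:ℂ) • x + (1:ℂ) • a) 4 = 0 := by simp [ha]
    exact lt_of_le_of_lt (rank_ub _ h4) (by omega)
  · refine ⟨1, -(x 4)/(a 4), by simp, ?_⟩
    rw [lin]
    have h4 : ((1:ℂ) • x + (-(x 4)/(a 4)) • a) 4 = 0 := by
      simp only [Pi.add_apply, Pi.smul_apply, smul_eq_mul, one_mul]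
      field_simp
      ring
    exact lt_of_le_of_lt (rank_ub _ h4) (by omega)
end
end
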